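/- arXiv:1807.05420 — 2 statements merged into one kernel-verified Lean document; each statement's English description precedes it below -/
import Mathlib

section
/- Assume μ satisfies Dalang's condition ∫_{ℝ^d} (1+|ξ|²)^{−1} μ(dξ) < ∞. Then for every t > 0 and every γ > 0, the series H̃(t;γ) := ∑_{n≥0} √(γ^n h_n(t)) converges, i.e. H̃(t;γ) < ∞. -/
open MeasureTheory Real ENNReal Set Filter Topology

/-- `k(t) = ∫_{ℝ^d} e^{-t |ξ|²} μ(dξ)`. -/
noncomputable def heatK {d : ℕ} (μ : Measure (EuclideanSpace ℝ (Fin d))) (t : ℝ) : ℝ≥0∞ :=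
  ∫⁻ ξ, ENNReal.ofReal (Real.exp (-t * ‖ξ‖ ^ 2)) ∂μ

/-- `h_0(t) = 1` and, for `n = m + 1 ≥ 1`,
`h_n(t) = ∫_{0 < t_1 < ⋯ < t_n < t} k(t_2 - t_1) ⋯ k(t_n - t_{n-1}) k(t - t_n) dt_1 ⋯ dt_n`. -/
noncomputable def hSeq {d : ℕ} (μ : Measure (EuclideanSpace ℝ (Fin d))) : ℕ → ℝ → ℝ≥0∞
  | 0, _ => 1
  | (m + 1), t =>
    ∫⁻ s in {s : Fin (m + 1) → ℝ | StrictMono s ∧ 0 < s 0 ∧ s (Fin.last m) < t},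
      (∏ j : Fin m, heatK μ (s j.succ - s j.castSucc)) * heatK μ (t - s (Fin.last m))

set_option linter.dupNamespace false


section aux
variable {d : ℕ} (μ : Measure (EuclideanSpace ℝ (Fin d)))

lemma aux_sigmaFinite (hD : ∫⁻ ξ, ENNReal.ofReal ((1 + ‖ξ‖ ^ 2)⁻¹) ∂μ < ⊤) :
    SigmaFinite μ := by
  constructor
  refine ⟨⟨fun n => Metric.closedBall 0 n, fun _ => trivial, fun n => ?_, ?_⟩⟩
  · set c : ℝ≥0∞ := ENNReal.ofReal ((1 + (n:ℝ)^2)⁻¹) with hc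
    have hc0 : c ≠ 0 := by
      rw [hc]
      simp only [ne_eq, ENNReal.ofReal_eq_zero, not_le]
      positivity
    have key : c * μ (Metric.closedBall 0 n) ≤ ∫⁻ ξ, ENNReal.ofReal ((1 + ‖ξ‖ ^ 2)⁻¹) ∂μ := by
      rw [← setLIntegral_const]
      refine le_trans (setLIntegral_mono' (by measurability) fun ξ hξ => ?_)
        (setLIntegral_le_lintegral _ _)
      rw [Metric.mem_closedBall, dist_zero_right] at hξ
      refine ENNReal.ofReal_le_ofReal ?_
      have h1 : (0:ℝ) < 1 + ‖ξ‖^2 := by positivity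
      refine inv_anti₀ h1 ?_
      have : ‖ξ‖^2 ≤ (n:ℝ)^2 := by
        apply sq_le_sq' _ hξ
        linarith [norm_nonneg ξ]
      linarith
    have : c * μ (Metric.closedBall 0 n) < ⊤ := lt_of_le_of_lt key hD
    rcases ENNReal.lt_top_of_mul_ne_top_right this.ne hc0 with h
    exact h
  · refine eq_univ_iff_forall.2 fun ξ => mem_iUnion.2 ⟨⌈‖ξ‖⌉₊, ?_⟩
    simp only [Metric.mem_closedBall, dist_zero_right]
    exact Nat.le_ceil _

end aux


section aux2
variable {d : ℕ} (μ : Measure (EuclideanSpace ℝ (Fin d)))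

lemma aux_measurable_heatK [SFinite μ] : Measurable (heatK μ) := by
  have : Measurable (Function.uncurry fun (v : ℝ) (ξ : EuclideanSpace ℝ (Fin d)) =>
      ENNReal.ofReal (Real.exp (-v * ‖ξ‖ ^ 2))) := by
    apply ENNReal.measurable_ofReal.comp
    apply Real.measurable_exp.comp
    fun_prop
  exact this.lintegral_prod_right'

lemma aux_lintegral_pi_prod (f : ℝ → ℝ≥0∞) (hf : Measurable f) :
    ∀ n : ℕ, ∫⁻ u : Fin n → ℝ, ∏ j, f (u j) = (∫⁻ v, f v) ^ n := by
  intro n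
  induction n with
  | zero =>
      simp only [Finset.univ_eq_empty, Finset.prod_empty, pow_zero, lintegral_one]
      rw [volume_pi, Measure.pi_univ]
      simp
  | succ n ih =>
      have mp := measurePreserving_piFinSuccAbove (fun _ : Fin (n+1) => (volume : Measure ℝ)) 0
      set e := MeasurableEquiv.piFinSuccAbove (fun _ : Fin (n+1) => ℝ) 0 with he
      have hg : Measurable (fun p : ℝ × (Fin n → ℝ) => f p.1 * ∏ j, f (p.2 j)) := by
        apply (hf.comp measurable_fst).mul
        exact Finset.measurable_prod _ fun j _ => hf.comp ((measurable_pi_apply j).comp measurable_snd)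
      have key : ∀ u : Fin (n+1) → ℝ, (∏ j, f (u j)) = f (e u).1 * ∏ j, f ((e u).2 j) := by
        intro u
        rw [Fin.prod_univ_succ]
        congr 1
      calc ∫⁻ u : Fin (n+1) → ℝ, ∏ j, f (u j)
          = ∫⁻ u : Fin (n+1) → ℝ, (fun p : ℝ × (Fin n → ℝ) => f p.1 * ∏ j, f (p.2 j)) (e u) := by
            simp_rw [key]
        _ = ∫⁻ p : ℝ × (Fin n → ℝ), f p.1 * ∏ j, f (p.2 j)
              ∂((volume : Measure ℝ).prod (Measure.pi fun _ => volume)) := mp.lintegral_comp hg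
        _ = (∫⁻ v, f v) * ∫⁻ u : Fin n → ℝ, ∏ j, f (u j) := by
            exact lintegral_prod_mul hf.aemeasurable
              (Finset.measurable_prod _ fun j _ => hf.comp (measurable_pi_apply j)).aemeasurable
        _ = (∫⁻ v, f v) ^ (n+1) := by rw [ih, pow_succ']

end aux2


namespace HeatAux

/-- The matrix of the gap map. -/
def Mmat (m : ℕ) : Matrix (Fin (m+1)) (Fin (m+1)) ℝ :=
  Matrix.of fun j i => if i = j then -1 else if (i : ℕ) = (j : ℕ) + 1 then 1 else 0

/-- The affine change of variables `s ↦ (s₁ - s₀, …, sₘ - s_{m-1}, t - sₘ)`. -/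
noncomputable def Tmap (m : ℕ) (t : ℝ) : (Fin (m+1) → ℝ) → (Fin (m+1) → ℝ) :=
  fun s => Matrix.toLin' (Mmat m) s + fun j => if j = Fin.last m then t else 0

lemma Mmat_apply (m : ℕ) (s : Fin (m+1) → ℝ) (j : Fin (m+1)) :
    Matrix.toLin' (Mmat m) s j = (∑ i, (if i = j then -s i else 0))
      + ∑ i : Fin (m+1), (if (i : ℕ) = (j : ℕ) + 1 then s i else 0) := by
  rw [Matrix.toLin'_apply, Matrix.mulVec, dotProduct, ← Finset.sum_add_distrib]
  refine Finset.sum_congr rfl fun i _ => ?_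
  by_cases h1 : i = j
  · have h2 : ¬ ((i : ℕ) = (j : ℕ) + 1) := by omega
    simp [Mmat, h1, h2]
  · by_cases h2 : (i : ℕ) = (j : ℕ) + 1
    · simp [Mmat, h1, h2]
    · simp [Mmat, h1, h2]

lemma Tmap_castSucc (m : ℕ) (t : ℝ) (s : Fin (m+1) → ℝ) (j : Fin m) :
    Tmap m t s j.castSucc = s j.succ - s j.castSucc := by
  have hlast : j.castSucc ≠ Fin.last m := (Fin.castSucc_lt_last j).ne
  simp only [Tmap, Pi.add_apply, hlast, if_neg, Mmat_apply]
  rw [Finset.sum_ite_eq' Finset.univ j.castSucc fun i => -s i]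
  have : ∑ i : Fin (m+1), (if (i : ℕ) = ((j.castSucc : Fin (m+1)) : ℕ) + 1 then s i else 0)
      = s j.succ := by
    have step : (∑ i : Fin (m+1), (if (i : ℕ) = ((j.castSucc : Fin (m+1)) : ℕ) + 1 then s i else 0))
        = ∑ i : Fin (m+1), (if i = j.succ then s i else 0) := by
      refine Finset.sum_congr rfl fun i _ => if_congr ?_ rfl rfl
      simp [Fin.ext_iff]
    rw [step, Finset.sum_ite_eq' Finset.univ j.succ s, if_pos (Finset.mem_univ _)]
  rw [this]
  simp [hlast]
  ring

lemma Tmap_last (m : ℕ) (t : ℝ) (s : Fin (m+1) → ℝ) :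
    Tmap m t s (Fin.last m) = t - s (Fin.last m) := by
  simp only [Tmap, Pi.add_apply, Mmat_apply, if_pos rfl]
  rw [Finset.sum_ite_eq' Finset.univ (Fin.last m) fun i => -s i]
  have hz : ∑ i : Fin (m+1), (if (i : ℕ) = ((Fin.last m : Fin (m+1)) : ℕ) + 1 then s i else 0)
      = 0 := by
    refine Finset.sum_eq_zero fun i _ => ?_
    have hi : (i : ℕ) < m + 1 := i.isLt
    have : ¬ ((i : ℕ) = ((Fin.last m : Fin (m+1)) : ℕ) + 1) := by
      simp only [Fin.val_last]; omega
    rw [if_neg this]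
  rw [hz]
  simp
  ring

lemma measurePreserving_Tmap (m : ℕ) (t : ℝ) :
    MeasurePreserving (Tmap m t) volume volume := by
  have hdet : (Mmat m).det = (-1) ^ (m+1) := by
    have htri : (Mmat m).BlockTriangular id := by
      intro i j hij
      simp only [id_eq] at hij
      have hji : (j : ℕ) < (i : ℕ) := hij
      have h1 : ¬ (j = i) := by
        intro h; rw [h] at hji; omega
      have h2 : ¬ ((j : ℕ) = (i : ℕ) + 1) := by omega
      simp [Mmat, h1, h2]
    rw [Matrix.det_of_upperTriangular htri]
    simp [Mmat]
  have hdet' : LinearMap.det (Matrix.toLin' (Mmat m)) ≠ 0 := by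
    rw [LinearMap.det_toLin', hdet]
    simp
  have hmeas : Measurable (Matrix.toLin' (Mmat m)) :=
    (LinearMap.continuous_on_pi _).measurable
  have hmp1 : MeasurePreserving (Matrix.toLin' (Mmat m)) volume volume := by
    refine ⟨hmeas, ?_⟩
    rw [Real.map_linearMap_volume_pi_eq_smul_volume_pi hdet', LinearMap.det_toLin', hdet]
    have : |((-1:ℝ)^(m+1))⁻¹| = 1 := by
      rw [abs_inv, abs_pow, abs_neg, abs_one, one_pow, inv_one]
    rw [this]
    simp
  have hmp2 : MeasurePreserving
      (fun u : Fin (m+1) → ℝ => u + fun j => if j = Fin.last m then t else 0) volume volume :=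
    measurePreserving_add_right volume _
  exact hmp2.comp hmp1

end HeatAux


namespace HeatAux

lemma Tmap_sum (m : ℕ) (t : ℝ) (s : Fin (m+1) → ℝ) :
    ∑ j, Tmap m t s j = t - s 0 := by
  rw [Fin.sum_univ_castSucc]
  simp only [Tmap_castSucc, Tmap_last]
  have g : ℕ → ℝ := fun i => s ⟨min i m, lt_of_le_of_lt (min_le_right _ _) (Nat.lt_succ_self m)⟩
  set g : ℕ → ℝ := fun i => s ⟨min i m, lt_of_le_of_lt (min_le_right _ _) (Nat.lt_succ_self m)⟩
    with hg
  have key : ∑ j : Fin m, (s j.succ - s j.castSucc) = ∑ j : Fin m, (g ((j : ℕ) + 1) - g (j : ℕ)) := by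
    refine Finset.sum_congr rfl fun j _ => ?_
    have h1 : min ((j : ℕ) + 1) m = (j : ℕ) + 1 := Nat.min_eq_left j.isLt
    have h2 : min (j : ℕ) m = (j : ℕ) := Nat.min_eq_left (le_of_lt j.isLt)
    congr 1
    · congr 1; exact Fin.ext (by simp [hg, h1])
    · congr 1; exact Fin.ext (by simp [hg, h2])
  rw [key, Fin.sum_univ_eq_sum_range (fun i => g (i+1) - g i) m, Finset.sum_range_sub g m]
  have hgm : g m = s (Fin.last m) := by
    simp only [hg]; congr 1; exact Fin.ext (by simp)
  have hg0 : g 0 = s 0 := by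
    simp only [hg]; congr 1
  rw [hgm, hg0]
  ring

section main
variable {d : ℕ} (μ : Measure (EuclideanSpace ℝ (Fin d)))

noncomputable def Kfun (lam : ℝ) : ℝ≥0∞ :=
  ∫⁻ v in Ioi (0:ℝ), ENNReal.ofReal (Real.exp (-lam * v)) * heatK μ v

noncomputable def fker (lam : ℝ) : ℝ → ℝ≥0∞ :=
  (Ioi (0:ℝ)).indicator fun v => ENNReal.ofReal (Real.exp (-lam * v)) * heatK μ v

lemma measurable_fker [SFinite μ] (lam : ℝ) : Measurable (fker μ lam) := by
  refine Measurable.indicator ?_ measurableSet_Ioi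
  exact ((ENNReal.measurable_ofReal.comp (Real.measurable_exp.comp (by fun_prop))).mul
    (aux_measurable_heatK μ))

lemma lintegral_fker [SFinite μ] (lam : ℝ) : ∫⁻ v, fker μ lam v = Kfun μ lam := by
  rw [fker, lintegral_indicator measurableSet_Ioi]; rfl

lemma aux_hSeq_le [SigmaFinite μ] (lam t : ℝ) (hlam : 0 < lam) (ht : 0 < t) (n : ℕ) :
    hSeq μ n t ≤ ENNReal.ofReal (Real.exp (lam * t)) * (Kfun μ lam) ^ n := by
  cases n with
  | zero =>
      simp only [hSeq, pow_zero, mul_one]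
      rw [show (1 : ℝ≥0∞) = ENNReal.ofReal 1 from (ENNReal.ofReal_one).symm]
      exact ENNReal.ofReal_le_ofReal (Real.one_le_exp (by positivity))
  | succ m =>
      set A : Set (Fin (m+1) → ℝ) :=
        {s : Fin (m + 1) → ℝ | StrictMono s ∧ 0 < s 0 ∧ s (Fin.last m) < t} with hA
      set F : (Fin (m+1) → ℝ) → ℝ≥0∞ := fun s =>
        (∏ j : Fin m, heatK μ (s j.succ - s j.castSucc)) * heatK μ (t - s (Fin.last m)) with hF
      have hseq : hSeq μ (m+1) t = ∫⁻ s in A, F s := rfl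
      have hAmeas : MeasurableSet A := by
        have : A = (⋂ j : Fin m, {s : Fin (m+1) → ℝ | s j.castSucc < s j.succ}) ∩
            ({s : Fin (m+1) → ℝ | 0 < s 0} ∩ {s : Fin (m+1) → ℝ | s (Fin.last m) < t}) := by
          ext s
          simp only [hA, mem_setOf_eq, mem_inter_iff, mem_iInter, Fin.strictMono_iff_lt_succ]
        rw [this]
        refine MeasurableSet.inter (MeasurableSet.iInter fun j => ?_) (MeasurableSet.inter ?_ ?_)
        · exact measurableSet_lt (measurable_pi_apply _) (measurable_pi_apply _)
        · exact measurableSet_lt measurable_const (measurable_pi_apply _)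
        · exact measurableSet_lt (measurable_pi_apply _) measurable_const
      set c : ℝ≥0∞ := ENNReal.ofReal (Real.exp (-(lam * t))) with hc
      have key : c * hSeq μ (m+1) t ≤ (Kfun μ lam) ^ (m+1) := by
        rw [hseq, ← lintegral_const_mul' c F ENNReal.ofReal_ne_top]
        have step3 : ∫⁻ s in A, c * F s ≤
            ∫⁻ s in A, ∏ j : Fin (m+1), fker μ lam (Tmap m t s j) := by
          refine setLIntegral_mono' hAmeas fun s hs => ?_
          obtain ⟨hsm, hs0, hst⟩ := hs
          have hpos : ∀ j : Fin (m+1), 0 < Tmap m t s j := by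
            refine Fin.lastCases ?_ ?_
            · rw [Tmap_last]; linarith
            · intro j
              rw [Tmap_castSucc]
              exact sub_pos.2 (hsm (Fin.castSucc_lt_succ : j.castSucc < j.succ))
          have hsum : ∑ j, Tmap m t s j = t - s 0 := Tmap_sum m t s
          have heq : ∏ j : Fin (m+1), fker μ lam (Tmap m t s j)
              = ENNReal.ofReal (Real.exp (-lam * (t - s 0))) * F s := by
            have h1 : ∀ j : Fin (m+1), fker μ lam (Tmap m t s j)
                = ENNReal.ofReal (Real.exp (-lam * Tmap m t s j)) * heatK μ (Tmap m t s j) :=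
              fun j => indicator_of_mem (hpos j) _
            simp_rw [h1]
            rw [Finset.prod_mul_distrib]
            congr 1
            · rw [← ENNReal.ofReal_prod_of_nonneg (fun _ _ => (Real.exp_pos _).le),
                ← Real.exp_sum]
              congr 1
              rw [← Finset.mul_sum, hsum]
            · rw [Fin.prod_univ_castSucc]
              simp_rw [Tmap_castSucc, Tmap_last]
              rfl
          rw [heq]
          refine mul_le_mul_left ?_ (F s)
          refine ENNReal.ofReal_le_ofReal (Real.exp_le_exp.2 ?_)
          nlinarith
        refine le_trans step3 ?_
        refine le_trans (setLIntegral_le_lintegral _ _) ?_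
        have hprod : Measurable fun u : Fin (m+1) → ℝ => ∏ j, fker μ lam (u j) :=
          Finset.measurable_prod _ fun j _ => (measurable_fker μ lam).comp (measurable_pi_apply j)
        have step5 : ∫⁻ s : Fin (m+1) → ℝ, ∏ j, fker μ lam (Tmap m t s j)
            = ∫⁻ u : Fin (m+1) → ℝ, ∏ j, fker μ lam (u j) :=
          (measurePreserving_Tmap m t).lintegral_comp hprod
        rw [step5, aux_lintegral_pi_prod (fker μ lam) (measurable_fker μ lam) (m+1),
          lintegral_fker]
      -- conclude
      have hck : ENNReal.ofReal (Real.exp (lam * t)) * c = 1 := by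
        rw [hc, ← ENNReal.ofReal_mul (Real.exp_nonneg _), ← Real.exp_add]
        simp
      calc hSeq μ (m+1) t = (ENNReal.ofReal (Real.exp (lam * t)) * c) * hSeq μ (m+1) t := by
            rw [hck, one_mul]
        _ = ENNReal.ofReal (Real.exp (lam * t)) * (c * hSeq μ (m+1) t) := by ring
        _ ≤ ENNReal.ofReal (Real.exp (lam * t)) * (Kfun μ lam) ^ (m+1) :=
            mul_le_mul_right key _

end main
end HeatAux


namespace HeatAux
variable {d : ℕ} (μ : Measure (EuclideanSpace ℝ (Fin d)))

lemma lintegral_exp_neg_mul {b : ℝ} (hb : 0 < b) :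
    ∫⁻ v in Ioi (0:ℝ), ENNReal.ofReal (Real.exp (-b * v)) = ENNReal.ofReal b⁻¹ := by
  rw [← ofReal_integral_eq_lintegral_ofReal (exp_neg_integrableOn_Ioi 0 hb)
    (Filter.Eventually.of_forall fun x => (Real.exp_pos _).le)]
  congr 1
  have : ∀ x : ℝ, Real.exp (-b * x) = (fun y => Real.exp (-y)) (b * x) := by
    intro x; simp [neg_mul]
  calc ∫ x in Ioi (0:ℝ), Real.exp (-b * x)
      = ∫ x in Ioi (0:ℝ), (fun y => Real.exp (-y)) (b * x) := by
        refine integral_congr_ae (Filter.Eventually.of_forall fun x => ?_)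
        simp [neg_mul]
    _ = b⁻¹ • ∫ x in Ioi (b * 0), Real.exp (-x) := integral_comp_mul_left_Ioi (fun y => Real.exp (-y)) 0 hb
    _ = b⁻¹ := by
        rw [mul_zero, integral_exp_neg_Ioi, neg_zero, Real.exp_zero, smul_eq_mul, mul_one]

lemma aux_Kfun_eq [SigmaFinite μ] {lam : ℝ} (hlam : 0 < lam) :
    Kfun μ lam = ∫⁻ ξ, ENNReal.ofReal ((lam + ‖ξ‖ ^ 2)⁻¹) ∂μ := by
  have hmeas : Measurable (Function.uncurry fun (v : ℝ) (ξ : EuclideanSpace ℝ (Fin d)) =>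
      ENNReal.ofReal (Real.exp (-(lam + ‖ξ‖ ^ 2) * v))) := by
    apply ENNReal.measurable_ofReal.comp
    apply Real.measurable_exp.comp
    fun_prop
  calc Kfun μ lam
      = ∫⁻ v in Ioi (0:ℝ), ∫⁻ ξ, ENNReal.ofReal (Real.exp (-(lam + ‖ξ‖ ^ 2) * v)) ∂μ := by
        refine lintegral_congr fun v => ?_
        rw [heatK, ← lintegral_const_mul' _ _ ENNReal.ofReal_ne_top]
        refine lintegral_congr fun ξ => ?_
        rw [← ENNReal.ofReal_mul (Real.exp_nonneg _), ← Real.exp_add]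
        congr 2
        ring
    _ = ∫⁻ ξ, ∫⁻ v in Ioi (0:ℝ), ENNReal.ofReal (Real.exp (-(lam + ‖ξ‖ ^ 2) * v)) ∂(volume) ∂μ :=
        lintegral_lintegral_swap hmeas.aemeasurable
    _ = ∫⁻ ξ, ENNReal.ofReal ((lam + ‖ξ‖ ^ 2)⁻¹) ∂μ := by
        refine lintegral_congr fun ξ => ?_
        exact lintegral_exp_neg_mul (by positivity)

lemma aux_Kfun_tendsto [SigmaFinite μ]
    (hD : ∫⁻ ξ, ENNReal.ofReal ((1 + ‖ξ‖ ^ 2)⁻¹) ∂μ < ⊤) :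
    Tendsto (fun n : ℕ => Kfun μ ((n : ℝ) + 1)) atTop (𝓝 0) := by
  have heq : ∀ n : ℕ, Kfun μ ((n : ℝ) + 1)
      = ∫⁻ ξ, ENNReal.ofReal (((n : ℝ) + 1 + ‖ξ‖ ^ 2)⁻¹) ∂μ := fun n =>
    aux_Kfun_eq μ (by positivity)
  simp_rw [heq]
  have h0 : (0 : ℝ≥0∞) = ∫⁻ _ : EuclideanSpace ℝ (Fin d), 0 ∂μ := by simp
  rw [h0]
  refine tendsto_lintegral_of_dominated_convergence
    (fun ξ => ENNReal.ofReal ((1 + ‖ξ‖ ^ 2)⁻¹)) (fun n => ?_) (fun n => ?_) hD.ne ?_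
  · exact ENNReal.measurable_ofReal.comp (by fun_prop)
  · refine Filter.Eventually.of_forall fun ξ => ENNReal.ofReal_le_ofReal ?_
    have h1 : (0:ℝ) < 1 + ‖ξ‖ ^ 2 := by positivity
    refine inv_anti₀ h1 ?_
    have : (0:ℝ) ≤ (n : ℝ) := Nat.cast_nonneg n
    linarith
  · refine Filter.Eventually.of_forall fun ξ => ?_
    have : Tendsto (fun n : ℕ => ((n : ℝ) + 1 + ‖ξ‖ ^ 2)⁻¹) atTop (𝓝 0) := by
      apply tendsto_inv_atTop_zero.comp
      apply Filter.tendsto_atTop_add_const_right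
      exact Filter.tendsto_atTop_add_const_right _ _ tendsto_natCast_atTop_atTop
    simpa using (ENNReal.tendsto_ofReal this)

end HeatAux

/-- Under Dalang's condition, `H̃(t;γ) = ∑_n √(γ^n h_n(t)) < ∞` for all `t > 0`, `γ > 0`. -/
theorem H_tilde_series_converges (d : ℕ) (hd : 1 ≤ d)
    (μ : Measure (EuclideanSpace ℝ (Fin d)))
    (hDalang : ∫⁻ ξ, ENNReal.ofReal ((1 + ‖ξ‖ ^ 2)⁻¹) ∂μ < ⊤) :
    ∀ t γ : ℝ, 0 < t → 0 < γ →
      (∑' n : ℕ, ((ENNReal.ofReal γ) ^ n * hSeq μ n t) ^ (1 / 2 : ℝ)) < ⊤ := by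
  haveI : SigmaFinite μ := aux_sigmaFinite μ hDalang
  intro t γ ht hγ
  have hγ0 : ENNReal.ofReal γ ≠ 0 := by
    simp only [ne_eq, ENNReal.ofReal_eq_zero, not_le]; exact hγ
  have hγT : ENNReal.ofReal γ ≠ ⊤ := ENNReal.ofReal_ne_top
  have hεpos : (0 : ℝ≥0∞) < (ENNReal.ofReal γ)⁻¹ := ENNReal.inv_pos.2 hγT
  obtain ⟨n, hn⟩ : ∃ n : ℕ, HeatAux.Kfun μ ((n : ℝ) + 1) < (ENNReal.ofReal γ)⁻¹ := by
    have := (HeatAux.aux_Kfun_tendsto μ hDalang).eventually (gt_mem_nhds hεpos)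
    exact this.exists
  set lam : ℝ := (n : ℝ) + 1 with hlam
  have hlam0 : 0 < lam := by positivity
  set K : ℝ≥0∞ := HeatAux.Kfun μ lam with hK
  set q : ℝ≥0∞ := ENNReal.ofReal γ * K with hq
  have hq1 : q < 1 := by
    calc q < ENNReal.ofReal γ * (ENNReal.ofReal γ)⁻¹ := by
          rw [hq]
          exact (ENNReal.mul_lt_mul_iff_right hγ0 hγT).2 hn
      _ = 1 := ENNReal.mul_inv_cancel hγ0 hγT
  set E : ℝ≥0∞ := ENNReal.ofReal (Real.exp (lam * t)) with hE
  set r : ℝ≥0∞ := q ^ (1/2 : ℝ) with hr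
  have hr1 : r < 1 := ENNReal.rpow_lt_one hq1 (by norm_num)
  have hterm : ∀ k : ℕ, ((ENNReal.ofReal γ) ^ k * hSeq μ k t) ^ (1 / 2 : ℝ)
      ≤ E ^ (1/2 : ℝ) * r ^ k := by
    intro k
    have h1 : (ENNReal.ofReal γ) ^ k * hSeq μ k t ≤ E * q ^ k := by
      calc (ENNReal.ofReal γ) ^ k * hSeq μ k t
          ≤ (ENNReal.ofReal γ) ^ k * (E * K ^ k) :=
            mul_le_mul_right (HeatAux.aux_hSeq_le μ lam t hlam0 ht k) _
        _ = E * q ^ k := by rw [hq, mul_pow]; ring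
    calc ((ENNReal.ofReal γ) ^ k * hSeq μ k t) ^ (1 / 2 : ℝ)
        ≤ (E * q ^ k) ^ (1 / 2 : ℝ) := ENNReal.rpow_le_rpow h1 (by norm_num)
      _ = E ^ (1/2 : ℝ) * (q ^ k) ^ (1/2 : ℝ) :=
          ENNReal.mul_rpow_of_nonneg _ _ (by norm_num)
      _ = E ^ (1/2 : ℝ) * r ^ k := by
          rw [hr, ← ENNReal.rpow_natCast q k, ← ENNReal.rpow_mul, mul_comm (k : ℝ) (1/2 : ℝ),
            ENNReal.rpow_mul, ENNReal.rpow_natCast]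
  calc (∑' k : ℕ, ((ENNReal.ofReal γ) ^ k * hSeq μ k t) ^ (1 / 2 : ℝ))
      ≤ ∑' k : ℕ, E ^ (1/2 : ℝ) * r ^ k := ENNReal.tsum_le_tsum hterm
    _ = E ^ (1/2 : ℝ) * ∑' k : ℕ, r ^ k := ENNReal.tsum_mul_left
    _ = E ^ (1/2 : ℝ) * (1 - r)⁻¹ := by rw [ENNReal.tsum_geometric]
    _ < ⊤ := by
        apply ENNReal.mul_lt_top
        · exact ENNReal.rpow_lt_top_of_nonneg (by norm_num) ENNReal.ofReal_ne_top
        · exact ENNReal.inv_lt_top.2 (tsub_pos_of_lt hr1)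
end

section
/- Let θ ∈ (0,1), let n ≥ 1 be an integer and let t > 0. Then ∫_{0<t_1<⋯<t_n<t} ( ∏_{j=1}^{n−1} k(t_{j+1}−t_j) ) (t−t_n)^{−θ} k((t−t_n)/2) dt_1 ⋯ dt_n = ∫_0^t h_{n−1}(s) (t−s)^{−θ} k((t−s)/2) ds ≤ h_{n−1}(t) · ∫_0^t s^{−θ} k(s/2) ds. -/
open MeasureTheory Real ENNReal

section Aux

variable {d : ℕ} (μ : Measure (EuclideanSpace ℝ (Fin d)))

lemma heatK_antitone : Antitone (heatK μ) := by
  intro a b hab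
  refine lintegral_mono fun ξ => ENNReal.ofReal_le_ofReal (Real.exp_le_exp.mpr ?_)
  have h2 : (0 : ℝ) ≤ ‖ξ‖ ^ 2 := by positivity
  nlinarith

lemma heatK_measurable : Measurable (heatK μ) := (heatK_antitone μ).measurable

lemma simplexSet_mble (n : ℕ) (t : ℝ) :
    MeasurableSet {s : Fin (n + 1) → ℝ | StrictMono s ∧ 0 < s 0 ∧ s (Fin.last n) < t} := by
  have h1 : {s : Fin (n + 1) → ℝ | StrictMono s}
      = ⋂ j : Fin n, {s : Fin (n + 1) → ℝ | s j.castSucc < s j.succ} := by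
    ext s; simp [Fin.strictMono_iff_lt_succ]
  have h2 : {s : Fin (n + 1) → ℝ | StrictMono s ∧ 0 < s 0 ∧ s (Fin.last n) < t}
      = ({s : Fin (n + 1) → ℝ | StrictMono s} ∩ {s | 0 < s 0}) ∩ {s | s (Fin.last n) < t} := by
    ext s; simp [Set.mem_setOf_eq, and_assoc]
  rw [h2, h1]
  refine MeasurableSet.inter (MeasurableSet.inter ?_ ?_) ?_
  · exact MeasurableSet.iInter fun j =>
      measurableSet_lt (measurable_pi_apply _) (measurable_pi_apply _)
  · exact measurableSet_lt measurable_const (measurable_pi_apply _)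
  · exact measurableSet_lt (measurable_pi_apply _) measurable_const

lemma strictMono_snoc_iff {n : ℕ} (u : Fin (n + 1) → ℝ) (r : ℝ) :
    StrictMono (Fin.snoc u r : Fin (n + 2) → ℝ) ↔ StrictMono u ∧ u (Fin.last n) < r := by
  rw [Fin.strictMono_iff_lt_succ, Fin.strictMono_iff_lt_succ]
  constructor
  · intro h
    refine ⟨fun i => ?_, ?_⟩
    · have := h i.castSucc
      simpa only [Fin.succ_castSucc, Fin.snoc_castSucc] using this
    · have := h (Fin.last n)
      simpa [Fin.succ_last, Fin.snoc_castSucc, Fin.snoc_last] using this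
  · rintro ⟨h1, h2⟩ j
    induction j using Fin.lastCases with
    | last => simpa [Fin.succ_last, Fin.snoc_castSucc, Fin.snoc_last] using h2
    | cast i => simpa only [Fin.succ_castSucc, Fin.snoc_castSucc] using h1 i

lemma snoc_mem_iff {n : ℕ} (u : Fin (n + 1) → ℝ) (r t : ℝ) :
    (Fin.snoc u r : Fin (n + 2) → ℝ) ∈
      {s : Fin (n + 2) → ℝ | StrictMono s ∧ 0 < s 0 ∧ s (Fin.last (n + 1)) < t}
    ↔ (u ∈ {v : Fin (n + 1) → ℝ | StrictMono v ∧ 0 < v 0 ∧ v (Fin.last n) < r})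
        ∧ r ∈ Set.Ioo (0 : ℝ) t := by
  have h0 : (Fin.snoc u r : Fin (n + 2) → ℝ) 0 = u 0 := by
    have h : ((0 : Fin (n + 1)).castSucc) = (0 : Fin (n + 2)) := rfl
    rw [← h, Fin.snoc_castSucc]
  have hl : (Fin.snoc u r : Fin (n + 2) → ℝ) (Fin.last (n + 1)) = r := Fin.snoc_last _ _
  simp only [Set.mem_setOf_eq, Set.mem_Ioo, h0, hl, strictMono_snoc_iff]
  constructor
  · rintro ⟨⟨hm, hlr⟩, h0u, hrt⟩
    exact ⟨⟨hm, h0u, hlr⟩, lt_trans (lt_of_lt_of_le h0u (hm.monotone (Fin.zero_le _))) hlr, hrt⟩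
  · rintro ⟨⟨hm, h0u, hlr⟩, h0r, hrt⟩
    exact ⟨⟨hm, hlr⟩, h0u, hrt⟩

lemma prod_snoc {n : ℕ} (u : Fin (n + 1) → ℝ) (r : ℝ) :
    (∏ j : Fin (n + 1), heatK μ ((Fin.snoc u r : Fin (n + 2) → ℝ) j.succ
        - (Fin.snoc u r : Fin (n + 2) → ℝ) j.castSucc))
      = (∏ j : Fin n, heatK μ (u j.succ - u j.castSucc)) * heatK μ (r - u (Fin.last n)) := by
  rw [Fin.prod_univ_castSucc]
  congr 1
  · refine Finset.prod_congr rfl fun j _ => ?_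
    rw [Fin.succ_castSucc, Fin.snoc_castSucc, Fin.snoc_castSucc]
  · rw [Fin.succ_last, Fin.snoc_last, Fin.snoc_castSucc]

/-- The splitting equivalence separating off the last coordinate. -/
noncomputable def eSplit (n : ℕ) : (Fin (n + 2) → ℝ) ≃ᵐ ℝ × (Fin (n + 1) → ℝ) :=
  MeasurableEquiv.piFinSuccAbove (fun _ : Fin (n + 2) => ℝ) (Fin.last (n + 1))

lemma mble_G {k : ℕ} (f : ℝ → ℝ≥0∞) (hf : Measurable f) :
    Measurable fun s : Fin (k + 1) → ℝ =>
      (∏ j : Fin k, heatK μ (s j.succ - s j.castSucc)) * f (s (Fin.last k)) := by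
  apply Measurable.mul
  · exact Finset.measurable_prod _ fun j _ =>
      (heatK_measurable μ).comp ((measurable_pi_apply _).sub (measurable_pi_apply _))
  · exact hf.comp (measurable_pi_apply _)

lemma hSlice (m : ℕ) (t : ℝ) (f : ℝ → ℝ≥0∞) (hf : Measurable f) :
    (∫⁻ s in {s : Fin (m + 1) → ℝ | StrictMono s ∧ 0 < s 0 ∧ s (Fin.last m) < t},
        (∏ j : Fin m, heatK μ (s j.succ - s j.castSucc)) * f (s (Fin.last m)))
      = ∫⁻ r in Set.Ioo (0 : ℝ) t, hSeq μ m r * f r := by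
  cases m with
  | zero =>
    have h := (volume_preserving_funUnique (Fin 1) ℝ).setLIntegral_comp_preimage_emb
      (MeasurableEquiv.funUnique (Fin 1) ℝ).measurableEmbedding f (Set.Ioo (0 : ℝ) t)
    have hs : {s : Fin 1 → ℝ | StrictMono s ∧ 0 < s 0 ∧ s (Fin.last 0) < t}
        = (MeasurableEquiv.funUnique (Fin 1) ℝ) ⁻¹' Set.Ioo (0 : ℝ) t := by
      ext s
      constructor
      · rintro ⟨-, h1, h2⟩; exact ⟨h1, h2⟩
      · rintro ⟨h1, h2⟩; exact ⟨Subsingleton.strictMono s, h1, h2⟩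
    have hone : ∀ r : ℝ, hSeq μ 0 r * f r = f r := by intro r; simp [hSeq]
    simp only [Fin.prod_univ_zero, one_mul, hone]
    rw [hs]
    exact h
  | succ n =>
    set S := {s : Fin (n + 2) → ℝ | StrictMono s ∧ 0 < s 0 ∧ s (Fin.last (n + 1)) < t} with hSdef
    have hS : MeasurableSet S := simplexSet_mble (n + 1) t
    have hG : Measurable fun s : Fin (n + 2) → ℝ =>
        (∏ j : Fin (n + 1), heatK μ (s j.succ - s j.castSucc)) * f (s (Fin.last (n + 1))) :=
      mble_G μ f hf
    set G : (Fin (n + 2) → ℝ) → ℝ≥0∞ := fun s =>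
      (∏ j : Fin (n + 1), heatK μ (s j.succ - s j.castSucc)) * f (s (Fin.last (n + 1)))
      with hGdef
    have mp : MeasurePreserving (eSplit n) volume volume :=
      volume_preserving_piFinSuccAbove _ _
    have hesymm : ∀ (r : ℝ) (u : Fin (n + 1) → ℝ), (eSplit n).symm (r, u) = Fin.snoc u r := by
      intro r u
      show (Fin.insertNthEquiv (fun _ => ℝ) (Fin.last (n + 1))) (r, u) = _
      simp [Fin.insertNthEquiv, Fin.insertNth_last']
    have key : ∀ r : ℝ, (∫⁻ u : Fin (n + 1) → ℝ, S.indicator G ((eSplit n).symm (r, u)))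
        = (Set.Ioo (0 : ℝ) t).indicator (fun r => hSeq μ (n + 1) r * f r) r := by
      intro r
      simp only [hesymm r]
      by_cases hr : r ∈ Set.Ioo (0 : ℝ) t
      · rw [Set.indicator_of_mem hr]
        have hpt : ∀ u : Fin (n + 1) → ℝ, S.indicator G (Fin.snoc u r)
            = Set.indicator {v : Fin (n + 1) → ℝ | StrictMono v ∧ 0 < v 0 ∧ v (Fin.last n) < r}
                (fun u => ((∏ j : Fin n, heatK μ (u j.succ - u j.castSucc))
                  * heatK μ (r - u (Fin.last n))) * f r) u := by
          intro u
          by_cases hu : u ∈ {v : Fin (n + 1) → ℝ | StrictMono v ∧ 0 < v 0 ∧ v (Fin.last n) < r}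
          · rw [Set.indicator_of_mem hu,
              Set.indicator_of_mem (show Fin.snoc u r ∈ S from (snoc_mem_iff u r t).mpr ⟨hu, hr⟩)]
            show (∏ j : Fin (n + 1), heatK μ ((Fin.snoc u r : Fin (n + 2) → ℝ) j.succ
                - (Fin.snoc u r : Fin (n + 2) → ℝ) j.castSucc))
                * f ((Fin.snoc u r : Fin (n + 2) → ℝ) (Fin.last (n + 1))) = _
            rw [prod_snoc μ u r, Fin.snoc_last]
          · rw [Set.indicator_of_notMem hu, Set.indicator_of_notMem]
            intro hmem
            exact hu ((snoc_mem_iff u r t).mp hmem).1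
        simp only [hpt]
        rw [lintegral_indicator (simplexSet_mble n r) _,
          lintegral_mul_const _ (mble_G μ (fun x => heatK μ (r - x))
            ((heatK_measurable μ).comp (measurable_const.sub measurable_id)))]
        rfl
      · rw [Set.indicator_of_notMem hr]
        have hz : ∀ u : Fin (n + 1) → ℝ, S.indicator G (Fin.snoc u r) = 0 := by
          intro u
          apply Set.indicator_of_notMem
          intro hmem
          exact hr ((snoc_mem_iff u r t).mp hmem).2
        simp only [hz]
        exact lintegral_zero
    calc (∫⁻ s in S, G s)
        = ∫⁻ s, S.indicator G s := (lintegral_indicator hS G).symm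
      _ = ∫⁻ p : ℝ × (Fin (n + 1) → ℝ), S.indicator G ((eSplit n).symm p) :=
          ((mp.symm (eSplit n)).lintegral_comp_emb (eSplit n).symm.measurableEmbedding _).symm
      _ = ∫⁻ r : ℝ, ∫⁻ u : Fin (n + 1) → ℝ, S.indicator G ((eSplit n).symm (r, u)) := by
          rw [Measure.volume_eq_prod]
          exact lintegral_prod _ ((hG.indicator hS).comp (eSplit n).symm.measurable).aemeasurable
      _ = ∫⁻ r : ℝ, (Set.Ioo (0 : ℝ) t).indicator (fun r => hSeq μ (n + 1) r * f r) r :=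
          lintegral_congr key
      _ = ∫⁻ r in Set.Ioo (0 : ℝ) t, hSeq μ (n + 1) r * f r :=
          lintegral_indicator measurableSet_Ioo _

lemma hSeq_mono (m : ℕ) : Monotone (hSeq μ m) := by
  intro a b hab
  cases m with
  | zero => simp [hSeq]
  | succ n =>
    set c : ℝ := b - a with hc
    have hc0 : 0 ≤ c := sub_nonneg.mpr hab
    set cvec : Fin (n + 1) → ℝ := fun _ => c with hcvec
    have mp : MeasurePreserving (fun u : Fin (n + 1) → ℝ => u + cvec) volume volume :=
      measurePreserving_add_right volume _
    have hemb : MeasurableEmbedding (fun u : Fin (n + 1) → ℝ => u + cvec) :=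
      (MeasurableEquiv.addRight cvec).measurableEmbedding
    have key := mp.setLIntegral_comp_emb hemb
      (fun v : Fin (n + 1) → ℝ =>
        (∏ j : Fin n, heatK μ (v j.succ - v j.castSucc)) * heatK μ (b - v (Fin.last n)))
      {v : Fin (n + 1) → ℝ | StrictMono v ∧ 0 < v 0 ∧ v (Fin.last n) < a}
    have hfun : ∀ u : Fin (n + 1) → ℝ,
        (∏ j : Fin n, heatK μ (u j.succ - u j.castSucc)) * heatK μ (a - u (Fin.last n))
        = (∏ j : Fin n, heatK μ ((u + cvec) j.succ - (u + cvec) j.castSucc))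
            * heatK μ (b - (u + cvec) (Fin.last n)) := by
      intro u
      have hab' : b - (u (Fin.last n) + c) = a - u (Fin.last n) := by rw [hc]; ring
      simp only [Pi.add_apply, hcvec, add_sub_add_right_eq_sub, hab']
    have himg : ((fun u : Fin (n + 1) → ℝ => u + cvec) ''
        {v : Fin (n + 1) → ℝ | StrictMono v ∧ 0 < v 0 ∧ v (Fin.last n) < a})
        ⊆ {v : Fin (n + 1) → ℝ | StrictMono v ∧ 0 < v 0 ∧ v (Fin.last n) < b} := by
      rintro w ⟨u, ⟨hm, h0, hl⟩, rfl⟩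
      refine ⟨fun x y hxy => ?_, ?_, ?_⟩
      · simp only [Pi.add_apply, hcvec]
        exact add_lt_add_left (hm hxy) c
      · simp only [Pi.add_apply, hcvec]
        exact add_pos_of_pos_of_nonneg h0 hc0
      · simp only [Pi.add_apply, hcvec]
        have hcd : c = b - a := hc
        linarith
    calc hSeq μ (n + 1) a
        = ∫⁻ u in {v : Fin (n + 1) → ℝ | StrictMono v ∧ 0 < v 0 ∧ v (Fin.last n) < a},
            (∏ j : Fin n, heatK μ ((u + cvec) j.succ - (u + cvec) j.castSucc))
              * heatK μ (b - (u + cvec) (Fin.last n)) := lintegral_congr hfun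
      _ = ∫⁻ v in (fun u : Fin (n + 1) → ℝ => u + cvec) ''
            {v : Fin (n + 1) → ℝ | StrictMono v ∧ 0 < v 0 ∧ v (Fin.last n) < a},
            (∏ j : Fin n, heatK μ (v j.succ - v j.castSucc))
              * heatK μ (b - v (Fin.last n)) := key
      _ ≤ ∫⁻ v in {v : Fin (n + 1) → ℝ | StrictMono v ∧ 0 < v 0 ∧ v (Fin.last n) < b},
            (∏ j : Fin n, heatK μ (v j.succ - v j.castSucc))
              * heatK μ (b - v (Fin.last n)) := lintegral_mono_set himg
      _ = hSeq μ (n + 1) b := rfl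

end Aux

/-- For `θ ∈ (0,1)`, `n = m + 1 ≥ 1` and `t > 0`:
`∫_{0<t_1<⋯<t_n<t} (∏_{j=1}^{n-1} k(t_{j+1}-t_j)) (t-t_n)^{-θ} k((t-t_n)/2) dt_1⋯dt_n`
`= ∫_0^t h_{n-1}(s) (t-s)^{-θ} k((t-s)/2) ds ≤ h_{n-1}(t) ∫_0^t s^{-θ} k(s/2) ds`. -/
theorem simplex_integral_eq_and_le (d : ℕ) (hd : 1 ≤ d)
    (μ : Measure (EuclideanSpace ℝ (Fin d)))
    (θ : ℝ) (hθ : θ ∈ Set.Ioo (0 : ℝ) 1) (m : ℕ) (t : ℝ) (ht : 0 < t) :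
    (∫⁻ s in {s : Fin (m + 1) → ℝ | StrictMono s ∧ 0 < s 0 ∧ s (Fin.last m) < t},
        (∏ j : Fin m, heatK μ (s j.succ - s j.castSucc))
          * (ENNReal.ofReal ((t - s (Fin.last m)) ^ (-θ)) * heatK μ ((t - s (Fin.last m)) / 2)))
      = ∫⁻ s in Set.Ioo (0 : ℝ) t,
          hSeq μ m s * (ENNReal.ofReal ((t - s) ^ (-θ)) * heatK μ ((t - s) / 2))
    ∧ (∫⁻ s in Set.Ioo (0 : ℝ) t,
          hSeq μ m s * (ENNReal.ofReal ((t - s) ^ (-θ)) * heatK μ ((t - s) / 2)))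
        ≤ hSeq μ m t * ∫⁻ s in Set.Ioo (0 : ℝ) t,
            ENNReal.ofReal (s ^ (-θ)) * heatK μ (s / 2) := by
  have hfm : Measurable fun r : ℝ =>
      ENNReal.ofReal ((t - r) ^ (-θ)) * heatK μ ((t - r) / 2) := by
    apply Measurable.mul
    · exact ENNReal.measurable_ofReal.comp
        ((measurable_const.sub measurable_id).pow measurable_const)
    · exact (heatK_measurable μ).comp ((measurable_const.sub measurable_id).div_const 2)
  constructor
  · exact hSlice μ m t
      (fun r => ENNReal.ofReal ((t - r) ^ (-θ)) * heatK μ ((t - r) / 2)) hfm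
  · calc (∫⁻ s in Set.Ioo (0 : ℝ) t,
          hSeq μ m s * (ENNReal.ofReal ((t - s) ^ (-θ)) * heatK μ ((t - s) / 2)))
        ≤ ∫⁻ s in Set.Ioo (0 : ℝ) t,
            hSeq μ m t * (ENNReal.ofReal ((t - s) ^ (-θ)) * heatK μ ((t - s) / 2)) :=
          setLIntegral_mono' measurableSet_Ioo fun s hs =>
            mul_le_mul_left (hSeq_mono μ m (le_of_lt hs.2)) _
      _ = hSeq μ m t * ∫⁻ s in Set.Ioo (0 : ℝ) t,
            ENNReal.ofReal ((t - s) ^ (-θ)) * heatK μ ((t - s) / 2) :=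
          lintegral_const_mul _ hfm
      _ = hSeq μ m t * ∫⁻ s in Set.Ioo (0 : ℝ) t,
            ENNReal.ofReal (s ^ (-θ)) * heatK μ (s / 2) := by
          congr 1
          have mp : MeasurePreserving (fun x : ℝ => t - x) volume volume :=
            Measure.measurePreserving_sub_left volume t
          have hemb : MeasurableEmbedding (fun x : ℝ => t - x) :=
            (MeasurableEquiv.subLeft t).measurableEmbedding
          have h := mp.setLIntegral_comp_preimage_emb hemb
            (fun s => ENNReal.ofReal (s ^ (-θ)) * heatK μ (s / 2)) (Set.Ioo (0 : ℝ) t)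
          have hpre : (fun x : ℝ => t - x) ⁻¹' Set.Ioo (0 : ℝ) t = Set.Ioo (0 : ℝ) t := by
            ext x
            simp only [Set.mem_preimage, Set.mem_Ioo]
            constructor
            · rintro ⟨h1, h2⟩; exact ⟨by linarith, by linarith⟩
            · rintro ⟨h1, h2⟩; exact ⟨by linarith, by linarith⟩
          rw [hpre] at h
          exact h
end
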